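/- Let p ≥ 1 and let ξ ∈ ℝ^N be a vector of N pairwise distinct nodes with first entry ξ_1 = a and last entry ξ_N = b, where a < b. Then the following are equivalent: (i) there exists a quadrature rule with positive weights of degree ≥ 2p on these nodes, i.e. a diagonal matrix H ∈ ℝ^{N×N} with positive diagonal entries such that 1ᵀ H ξ^k = (b^{k+1} − a^{k+1})/(k+1) for all k = 0, …, 2p; (ii) there exists a degree preserving SBP operator of degree p on these nodes, i.e. a diagonal positive-definite norm matrix H of quadrature degree ≥ 2p together with a matrix Q ∈ ℝ^{N×N} satisfying Q + Qᵀ = e_N e_Nᵀ − e_1 e_1ᵀ and Q ξ^k = k H ξ^{k−1} for k = 0, …, p (with ξ^{−1} interpreted as the zero vector). -/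

import Mathlib

open Matrix



private lemma sbp_aux_node_count {N p : ℕ} (w ξ : Fin N → ℝ)
    {a b : ℝ} (hab : a < b)
    (hquad : ∀ k ≤ 2 * p, ∑ i, w i * ξ i ^ k = (b ^ (k+1) - a ^ (k+1)) / ((k:ℝ)+1)) :
    p < N := by
  by_contra hle
  push_neg at hle
  set f : Polynomial ℝ := ∏ i : Fin N, (Polynomial.X - Polynomial.C (ξ i)) ^ 2 with hf
  have hdeg : f.natDegree < 2 * p + 1 := by
    have h1 := Polynomial.natDegree_prod_le (Finset.univ : Finset (Fin N))
      (fun i => (Polynomial.X - Polynomial.C (ξ i)) ^ 2)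
    have h2 : ∀ i : Fin N, ((Polynomial.X - Polynomial.C (ξ i)) ^ 2).natDegree ≤ 2 := by
      intro i
      calc ((Polynomial.X - Polynomial.C (ξ i)) ^ 2).natDegree
          ≤ 2 * (Polynomial.X - Polynomial.C (ξ i)).natDegree := Polynomial.natDegree_pow_le
        _ ≤ 2 := by rw [Polynomial.natDegree_X_sub_C]
    rw [← hf] at h1
    have h3 : ∑ i : Fin N, ((Polynomial.X - Polynomial.C (ξ i)) ^ 2).natDegree ≤ 2 * N := by
      have := Finset.sum_le_sum (s := (Finset.univ : Finset (Fin N)))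
        (f := fun i : Fin N => ((Polynomial.X - Polynomial.C (ξ i)) ^ 2).natDegree)
        (g := fun _ => 2) (fun i _ => h2 i)
      simpa [mul_comm] using this
    omega
  have heval : ∀ x : ℝ, f.eval x = ∑ k ∈ Finset.range (2*p+1), f.coeff k * x ^ k := fun x =>
    Polynomial.eval_eq_sum_range' hdeg x
  have hnonneg : ∀ x : ℝ, 0 ≤ f.eval x := by
    intro x
    rw [hf, Polynomial.eval_prod]
    exact Finset.prod_nonneg fun i _ => by simp [sq_nonneg]
  have hzero : ∀ i : Fin N, f.eval (ξ i) = 0 := by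
    intro i
    rw [hf, Polynomial.eval_prod]
    exact Finset.prod_eq_zero (Finset.mem_univ i) (by simp)
  have hsum : ∑ i, w i * f.eval (ξ i) = ∫ x in a..b, f.eval x := by
    calc ∑ i, w i * f.eval (ξ i)
        = ∑ k ∈ Finset.range (2*p+1), f.coeff k * ∑ i, w i * ξ i ^ k := by
          simp_rw [heval, Finset.mul_sum]
          rw [Finset.sum_comm]
          exact Finset.sum_congr rfl fun k _ => Finset.sum_congr rfl fun i _ => by ring
      _ = ∑ k ∈ Finset.range (2*p+1), f.coeff k * ∫ x in a..b, x ^ k := by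
          refine Finset.sum_congr rfl fun k hk => ?_
          rw [Finset.mem_range] at hk
          rw [hquad k (by omega), integral_pow]
      _ = ∫ x in a..b, ∑ k ∈ Finset.range (2*p+1), f.coeff k * x ^ k := by
          rw [intervalIntegral.integral_finset_sum]
          · exact Finset.sum_congr rfl fun k _ => by
              rw [intervalIntegral.integral_const_mul]
          · intro k _
            exact (continuous_const.mul (continuous_pow k)).intervalIntegrable _ _
      _ = ∫ x in a..b, f.eval x := by simp_rw [← heval]
  have hcont : Continuous fun x : ℝ => f.eval x := f.continuous
  have hpos : 0 < ∫ x in a..b, f.eval x := by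
    rw [intervalIntegral.integral_pos_iff_support_of_nonneg_ae
      (Filter.Eventually.of_forall hnonneg) (hcont.intervalIntegrable a b)]
    refine ⟨hab, ?_⟩
    have hsub : Set.Ioc a b \ Set.range ξ ⊆
        Function.support (fun x => f.eval x) ∩ Set.Ioc a b := by
      rintro x ⟨hx1, hx2⟩
      refine ⟨?_, hx1⟩
      have hxpos : 0 < f.eval x := by
        rw [hf, Polynomial.eval_prod]
        refine Finset.prod_pos fun i _ => ?_
        have hne : x - ξ i ≠ 0 := sub_ne_zero.mpr fun h => hx2 ⟨i, h.symm⟩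
        simp only [Polynomial.eval_pow, Polynomial.eval_sub, Polynomial.eval_X, Polynomial.eval_C]
        exact lt_of_le_of_ne (sq_nonneg _) (Ne.symm (pow_ne_zero 2 hne))
      exact Function.mem_support.mpr hxpos.ne'
    have h1 : MeasureTheory.volume (Set.Ioc a b \ Set.range ξ) = MeasureTheory.volume (Set.Ioc a b) :=
      MeasureTheory.measure_diff_null ((Set.finite_range ξ).measure_zero _)
    have h2 : (0 : ENNReal) < MeasureTheory.volume (Set.Ioc a b) := by
      rw [Real.volume_Ioc]
      exact ENNReal.ofReal_pos.mpr (by linarith)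
    calc (0:ENNReal) < MeasureTheory.volume (Set.Ioc a b \ Set.range ξ) := by rw [h1]; exact h2
      _ ≤ _ := MeasureTheory.measure_mono hsub
  have : ∑ i, w i * f.eval (ξ i) = 0 := by
    refine Finset.sum_eq_zero fun i _ => ?_
    rw [hzero i, mul_zero]
  rw [this] at hsum
  exact absurd hsum.symm hpos.ne'



private lemma sbp_aux_vdm {N n : ℕ} (ξ : Fin N → ℝ) (hinj : Function.Injective ξ)
    (hn : n ≤ N) (c : Fin n → ℝ)
    (hc : ∀ i : Fin N, ∑ k : Fin n, ξ i ^ (k:ℕ) * c k = 0) : c = 0 := by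
  rcases Nat.eq_zero_or_pos n with hn0 | hnpos
  · subst hn0; exact Subsingleton.elim _ _
  set g : Polynomial ℝ := ∑ k : Fin n, Polynomial.C (c k) * Polynomial.X ^ (k:ℕ) with hg
  have hdeg : g.natDegree < N := by
    have h1 : g.natDegree ≤ n - 1 := by
      rw [hg]
      refine Polynomial.natDegree_sum_le_of_forall_le _ _ fun k _ => ?_
      exact (Polynomial.natDegree_C_mul_le _ _).trans
        ((Polynomial.natDegree_X_pow _).le.trans (by omega))
    omega
  have hg0 : g = 0 := by
    refine Polynomial.eq_zero_of_natDegree_lt_card_of_eval_eq_zero g hinj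
      (fun i => ?_) (by simpa using hdeg)
    rw [hg, Polynomial.eval_finset_sum, ← hc i]
    exact Finset.sum_congr rfl fun j _ => by
      rw [Polynomial.eval_mul, Polynomial.eval_C, Polynomial.eval_pow, Polynomial.eval_X,
        mul_comm]
  funext k
  have hco := congrArg (fun q => Polynomial.coeff q (k:ℕ)) hg0
  simp only [hg, Polynomial.finset_sum_coeff, Polynomial.coeff_C_mul,
    Polynomial.coeff_X_pow, Polynomial.coeff_zero, mul_ite, mul_one, mul_zero] at hco
  rw [Finset.sum_eq_single k (fun j _ hj => by
      rw [if_neg (fun h => hj (Fin.ext h.symm))]) (by simp)] at hco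
  simpa using hco


/-- **Existence of degree preserving SBP operators.**
On a set of `N` pairwise distinct nodes with endpoints `a < b`, a quadrature
rule with positive weights of degree `≥ 2p` exists if and only if a degree
preserving SBP operator of degree `p` exists, i.e. a diagonal positive-definite
norm matrix `H` of quadrature degree `≥ 2p` together with `Q` satisfying
`Q + Qᵀ = e_N e_Nᵀ − e_1 e_1ᵀ` and `Q ξ^k = k H ξ^{k−1}` for `k = 0, …, p`
(with `ξ^{−1}` interpreted as the zero vector). -/
theorem degree_preserving_sbp_iff_positive_quadrature
    {N : ℕ} (p : ℕ) (hp : 1 ≤ p) (hN : 2 ≤ N)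
    (ξ : Fin N → ℝ) (hinj : Function.Injective ξ)
    (a b : ℝ) (hab : a < b)
    (ha : ξ ⟨0, by omega⟩ = a) (hb : ξ ⟨N - 1, by omega⟩ = b) :
    (∃ H : Matrix (Fin N) (Fin N) ℝ,
        H.IsDiag ∧ (∀ i, 0 < H i i) ∧
        (∀ k ≤ 2 * p,
          (fun _ => (1:ℝ)) ⬝ᵥ (H *ᵥ fun i => ξ i ^ k) =
            (b ^ (k + 1) - a ^ (k + 1)) / ((k : ℝ) + 1)))
    ↔
    (∃ H Q : Matrix (Fin N) (Fin N) ℝ,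
        H.IsDiag ∧ (∀ i, 0 < H i i) ∧
        (∀ k ≤ 2 * p,
          (fun _ => (1:ℝ)) ⬝ᵥ (H *ᵥ fun i => ξ i ^ k) =
            (b ^ (k + 1) - a ^ (k + 1)) / ((k : ℝ) + 1)) ∧
        Q + Qᵀ =
          vecMulVec (Pi.single (⟨N - 1, by omega⟩ : Fin N) 1)
              (Pi.single (⟨N - 1, by omega⟩ : Fin N) 1)
            - vecMulVec (Pi.single (⟨0, by omega⟩ : Fin N) 1)
              (Pi.single (⟨0, by omega⟩ : Fin N) 1) ∧
        (∀ k ≤ p,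
          Q *ᵥ (fun i => ξ i ^ k) =
            (k : ℝ) • (H *ᵥ fun i => if k = 0 then 0 else ξ i ^ (k - 1)))) := by
  constructor
  · rintro ⟨H, hdiag, hwpos, hq⟩
    classical
    -- diagonal action
    have hHv : ∀ v : Fin N → ℝ, H *ᵥ v = fun i => H i i * v i := by
      intro v; funext i
      simp only [mulVec, dotProduct]
      rw [Finset.sum_eq_single i (fun j _ hj => by
        rw [hdiag (Ne.symm hj), zero_mul]) (by simp)]
    set w : Fin N → ℝ := fun i => H i i with hw
    have hquad : ∀ k ≤ 2 * p, ∑ i, w i * ξ i ^ k = (b ^ (k+1) - a ^ (k+1)) / ((k:ℝ)+1) := by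
      intro k hk
      have := hq k hk
      rw [hHv] at this
      simpa [dotProduct] using this
    have hpN : p < N := sbp_aux_node_count w ξ hab hquad
    set i1 : Fin N := ⟨0, by omega⟩ with hi1
    set iN : Fin N := ⟨N - 1, by omega⟩ with hiN
    set V : Matrix (Fin N) (Fin (p+1)) ℝ := Matrix.of fun i k => ξ i ^ (k:ℕ) with hV
    have hVinj : ∀ c, V *ᵥ c = 0 → c = 0 := by
      intro c hc
      refine sbp_aux_vdm ξ hinj (by omega) c fun i => ?_
      have := congrFun hc i
      simpa [hV, mulVec, dotProduct] using this
    set P := Vᵀ * V with hP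
    have hPsym : Pᵀ = P := by rw [hP, transpose_mul, transpose_transpose]
    have hPdet : IsUnit P.det := by
      rw [isUnit_iff_ne_zero]
      intro hdet
      obtain ⟨v, hv0, hv⟩ := (Matrix.exists_mulVec_eq_zero_iff).2 hdet
      refine hv0 (hVinj v ?_)
      have h1 : (V *ᵥ v) ⬝ᵥ (V *ᵥ v) = 0 := by
        have : v ⬝ᵥ (P *ᵥ v) = 0 := by rw [hv, dotProduct_zero]
        rw [hP, ← Matrix.mulVec_mulVec, Matrix.dotProduct_mulVec, Matrix.vecMul_transpose] at this
        exact this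
      simp only [dotProduct] at h1
      funext i
      have := (Finset.sum_eq_zero_iff_of_nonneg (fun j _ => mul_self_nonneg ((V *ᵥ v) j))).1
        h1 i (Finset.mem_univ i)
      exact mul_self_eq_zero.1 this
    have hPl : P⁻¹ * P = 1 := Matrix.nonsing_inv_mul P hPdet
    have hPiT : P⁻¹ᵀ = P⁻¹ := by rw [Matrix.transpose_nonsing_inv, hPsym]
    have hξN : ξ iN = b := hb
    have hξ1 : ξ i1 = a := ha
    have hsing : ∀ (i0 : Fin N) (g : Fin N → ℝ), ∑ i, g i * (Pi.single i0 1 : Fin N → ℝ) i = g i0 := by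
      intro i0 g
      rw [Finset.sum_eq_single i0 (fun j _ hj => by rw [Pi.single_eq_of_ne hj, mul_zero])
        (fun h => absurd (Finset.mem_univ i0) h)]
      rw [Pi.single_eq_same, mul_one]
    set Y : Matrix (Fin N) (Fin (p+1)) ℝ := Matrix.of fun i k =>
        ((k:ℕ):ℝ) * (w i * (if (k:ℕ) = 0 then 0 else ξ i ^ ((k:ℕ)-1)))
          - (1/2) * ((Pi.single iN 1 : Fin N → ℝ) i * b ^ (k:ℕ) - (Pi.single i1 1 : Fin N → ℝ) i * a ^ (k:ℕ)) with hY
    set A := Vᵀ * Y with hA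
    have hAent : ∀ j k : Fin (p+1), A j k =
        (((k:ℕ):ℝ) / (((j:ℕ):ℝ) + ((k:ℕ):ℝ)) - 1/2)
          * (b ^ ((j:ℕ)+(k:ℕ)) - a ^ ((j:ℕ)+(k:ℕ))) := by
      intro j k
      have hmul : A j k = ∑ i, ξ i ^ (j:ℕ) * Y i k := by
        rw [hA, Matrix.mul_apply]
        exact Finset.sum_congr rfl fun i _ => by rw [Matrix.transpose_apply, hV, Matrix.of_apply]
      rw [hmul]
      rcases Nat.eq_zero_or_pos (k:ℕ) with hk0 | hk1
      · calc ∑ i, ξ i ^ (j:ℕ) * Y i k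
            = ∑ i, (-(1/2) * ((ξ i ^ (j:ℕ) * b ^ (k:ℕ)) * (Pi.single iN 1 : Fin N → ℝ) i)
                + (1/2) * ((ξ i ^ (j:ℕ) * a ^ (k:ℕ)) * (Pi.single i1 1 : Fin N → ℝ) i)) := by
              refine Finset.sum_congr rfl fun i _ => ?_
              rw [hY, Matrix.of_apply, hk0]
              push_cast
              ring
          _ = -(1/2) * (ξ iN ^ (j:ℕ) * b ^ (k:ℕ)) + (1/2) * (ξ i1 ^ (j:ℕ) * a ^ (k:ℕ)) := by
              rw [Finset.sum_add_distrib, ← Finset.mul_sum, ← Finset.mul_sum, hsing, hsing]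
          _ = _ := by
              rw [hξN, hξ1, ← pow_add, ← pow_add, hk0]
              push_cast
              rw [zero_div]
              ring
      · have hm1 : 1 ≤ (j:ℕ) + (k:ℕ) := by omega
        have hcast : (((j:ℕ) + (k:ℕ) - 1 : ℕ) : ℝ) + 1 = ((j:ℕ):ℝ) + ((k:ℕ):ℝ) := by
          rw [Nat.cast_sub hm1]
          push_cast
          ring
        have hmne : ((j:ℕ):ℝ) + ((k:ℕ):ℝ) ≠ 0 := by
          have : (0:ℝ) < ((k:ℕ):ℝ) := by exact_mod_cast hk1
          positivity
        calc ∑ i, ξ i ^ (j:ℕ) * Y i k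
            = ∑ i, (((k:ℕ):ℝ) * (w i * ξ i ^ ((j:ℕ)+(k:ℕ)-1))
                + (-(1/2) * ((ξ i ^ (j:ℕ) * b ^ (k:ℕ)) * (Pi.single iN 1 : Fin N → ℝ) i)
                + (1/2) * ((ξ i ^ (j:ℕ) * a ^ (k:ℕ)) * (Pi.single i1 1 : Fin N → ℝ) i))) := by
              refine Finset.sum_congr rfl fun i _ => ?_
              rw [hY, Matrix.of_apply, if_neg (by omega : ¬ (k:ℕ) = 0),
                show (j:ℕ) + (k:ℕ) - 1 = (j:ℕ) + ((k:ℕ) - 1) from by omega, pow_add]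
              ring
          _ = ((k:ℕ):ℝ) * ∑ i, w i * ξ i ^ ((j:ℕ)+(k:ℕ)-1)
                + (-(1/2) * (ξ iN ^ (j:ℕ) * b ^ (k:ℕ)) + (1/2) * (ξ i1 ^ (j:ℕ) * a ^ (k:ℕ))) := by
              rw [Finset.sum_add_distrib, Finset.sum_add_distrib, ← Finset.mul_sum,
                ← Finset.mul_sum, ← Finset.mul_sum, hsing, hsing]
          _ = _ := by
              rw [hquad ((j:ℕ)+(k:ℕ)-1) (by omega),
                show (j:ℕ)+(k:ℕ)-1+1 = (j:ℕ)+(k:ℕ) from by omega, hcast,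
                hξN, hξ1, ← pow_add, ← pow_add]
              field_simp
              ring
    have hAanti : ∀ j k : Fin (p+1), A k j = - A j k := by
      intro j k
      rw [hAent, hAent, Nat.add_comm (k:ℕ) (j:ℕ)]
      rcases Nat.eq_zero_or_pos ((j:ℕ) + (k:ℕ)) with h0 | hpos1
      · have hj0 : (j:ℕ) = 0 := by omega
        have hk0 : (k:ℕ) = 0 := by omega
        rw [hj0, hk0]
        norm_num
      · have hmne : ((j:ℕ):ℝ) + ((k:ℕ):ℝ) ≠ 0 := by
          have : (0:ℝ) < ((j:ℕ):ℝ) + ((k:ℕ):ℝ) := by exact_mod_cast hpos1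
          positivity
        have key : (((j:ℕ):ℝ) / (((k:ℕ):ℝ) + ((j:ℕ):ℝ)) - 1/2)
            = -((((k:ℕ):ℝ) / (((j:ℕ):ℝ) + ((k:ℕ):ℝ)) - 1/2)) := by
          rw [add_comm (((k:ℕ)):ℝ)]
          field_simp
          ring
        rw [key]
        ring
    have hAT : Aᵀ = - A := by
      ext j k
      rw [Matrix.transpose_apply, Matrix.neg_apply, hAanti]
    set S := Y * P⁻¹ * Vᵀ - V * P⁻¹ * Yᵀ - V * P⁻¹ * A * P⁻¹ * Vᵀ with hS
    have hST : Sᵀ = - S := by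
      rw [hS]
      simp only [Matrix.transpose_sub, Matrix.transpose_mul, Matrix.transpose_transpose, hPiT, hAT,
        Matrix.mul_neg, Matrix.neg_mul, Matrix.mul_assoc]
      abel
    have hYTV : Yᵀ * V = - A := by
      have h : Yᵀ * V = (Vᵀ * Y)ᵀ := by rw [Matrix.transpose_mul, Matrix.transpose_transpose]
      rw [h, ← hA, hAT]
    have hSV : S * V = Y := by
      rw [hS]
      simp only [Matrix.sub_mul, Matrix.mul_assoc]
      rw [← hP, hYTV, hPl]
      simp only [Matrix.mul_one, Matrix.mul_neg]
      abel
    set E : Matrix (Fin N) (Fin N) ℝ :=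
      vecMulVec (Pi.single iN 1) (Pi.single iN 1)
        - vecMulVec (Pi.single i1 1) (Pi.single i1 1) with hE
    have hET : Eᵀ = E := by
      rw [hE]
      ext i j2
      simp only [Matrix.transpose_apply, Matrix.sub_apply, Matrix.vecMulVec_apply]
      ring
    set Q := (1/2 : ℝ) • E + S with hQdef
    have hQsym : Q + Qᵀ = E := by
      rw [hQdef, Matrix.transpose_add, Matrix.transpose_smul, hET, hST]
      have h2 : (1/2:ℝ) • E + S + ((1/2:ℝ) • E + -S) = ((1/2:ℝ) + (1/2:ℝ)) • E := by module
      rw [h2]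
      norm_num
    have hQmul : ∀ k ≤ p, Q *ᵥ (fun i => ξ i ^ k)
        = (k : ℝ) • (H *ᵥ fun i => if k = 0 then 0 else ξ i ^ (k - 1)) := by
      intro k hk
      have hκ : k < p + 1 := by omega
      have hxk : (fun i => ξ i ^ k) = V *ᵥ Pi.single (⟨k, hκ⟩ : Fin (p+1)) 1 := by
        funext i
        rw [Matrix.mulVec_single]
        simp [hV]
      have hvv : ∀ (i0 : Fin N) (i : Fin N),
          (vecMulVec (Pi.single i0 1) (Pi.single i0 1) *ᵥ (fun i => ξ i ^ k)) i
            = (Pi.single i0 1 : Fin N → ℝ) i * ξ i0 ^ k := by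
        intro i0 i
        simp only [Matrix.mulVec, dotProduct, Matrix.vecMulVec_apply]
        calc ∑ j, (Pi.single i0 1 : Fin N → ℝ) i * (Pi.single i0 1 : Fin N → ℝ) j * ξ j ^ k
            = (Pi.single i0 1 : Fin N → ℝ) i
                * ∑ j, (ξ j ^ k) * (Pi.single i0 1 : Fin N → ℝ) j := by
              rw [Finset.mul_sum]
              exact Finset.sum_congr rfl fun j _ => by ring
          _ = _ := by rw [hsing]
      have hEx : E *ᵥ (fun i => ξ i ^ k)
          = fun i => (Pi.single iN 1 : Fin N → ℝ) i * b ^ k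
              - (Pi.single i1 1 : Fin N → ℝ) i * a ^ k := by
        funext i
        rw [hE, Matrix.sub_mulVec]
        simp only [Pi.sub_apply]
        rw [hvv iN i, hvv i1 i, hξN, hξ1]
      have hSx : (S *ᵥ fun i => ξ i ^ k) = fun i => Y i ⟨k, hκ⟩ := by
        rw [hxk, Matrix.mulVec_mulVec, hSV, Matrix.mulVec_single]
        funext i
        exact congrFun (one_smul ℝᵐᵒᵖ (Y.col ⟨k, hκ⟩)) i
      rw [hQdef, Matrix.add_mulVec, Matrix.smul_mulVec, hEx, hSx]
      funext i
      rw [hHv]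
      simp only [Pi.add_apply, Pi.smul_apply, smul_eq_mul, hY, Matrix.of_apply]
      ring

    exact ⟨H, Q, hdiag, hwpos, hq, hQsym, hQmul⟩
  · rintro ⟨H, Q, h1, h2, h3, -, -⟩
    exact ⟨H, h1, h2, h3⟩
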